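/- Let G be a finite abelian group of order n and S ⊆ G \ {0} with |S| = s ≥ 1. Then there exist s_1, …, s_k ∈ S with k ≤ ⌈n/s⌉ and s_1 + ⋯ + s_k = 0. -/

import Mathlib

/-- Image of a point under a relation. -/
def relImage {V : Type*} (E : V → V → Prop) (a : V) : Set V := {x | E a x}

/-- Image of a set under a relation. -/
def relSetImage {V : Type*} (E : V → V → Prop) (A : Set V) : Set V :=
  {y | ∃ x ∈ A, E x y}

/-- j-fold relational composition, with `relPow E 0` the identity relation. -/
def relPow {V : Type*} (E : V → V → Prop) : ℕ → V → V → Prop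
  | 0 => fun x y => x = y
  | (n+1) => fun x y => ∃ z, relPow E n x z ∧ E z y

/-- `f` is an automorphism of the relation `E`. -/
def IsRelAuto {V : Type*} (E : V → V → Prop) (f : V ≃ V) : Prop :=
  ∀ x y, E x y ↔ E (f x) (f y)

/-- The relation `E` is point-symmetric (vertex-transitive). -/
def PointSym {V : Type*} (E : V → V → Prop) : Prop :=
  ∀ x y : V, ∃ f : V ≃ V, IsRelAuto E f ∧ f x = y

/-- Boundary of a set: `∂(X) = Γ(X) \ X`. -/
def relBd {V : Type*} (E : V → V → Prop) (X : Set V) : Set V :=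
  relSetImage E X \ X

/-- Admissible sets for the definition of connectivity. -/
def relAdm {V : Type*} (E : V → V → Prop) (X : Set V) : Prop :=
  X.Finite ∧ X.Nonempty ∧ relSetImage E X ≠ Set.univ

/-- Connectivity: minimum boundary size over admissible sets. -/
noncomputable def relKappa {V : Type*} (E : V → V → Prop) : ℕ :=
  sInf {n | ∃ X : Set V, relAdm E X ∧ (relBd E X).ncard = n}

/-- A fragment achieves the connectivity. -/
def IsFragment {V : Type*} (E : V → V → Prop) (X : Set V) : Prop :=
  relAdm E X ∧ (relBd E X).ncard = relKappa E

/-- Cardinality of an atom. -/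
noncomputable def atomCard {V : Type*} (E : V → V → Prop) : ℕ :=
  sInf {n | ∃ X : Set V, IsFragment E X ∧ X.ncard = n}

/-- An atom: a fragment of minimum cardinality. -/
def IsRelAtom {V : Type*} (E : V → V → Prop) (A : Set V) : Prop :=
  IsFragment E A ∧ A.ncard = atomCard E

/-- `E` has a directed cycle of length `k`: `k` distinct vertices cyclically joined. -/
def HasCycle {V : Type*} (E : V → V → Prop) (k : ℕ) : Prop :=
  ∃ (a : V) (l : List V), (a :: l).length = k ∧ (a :: l).Nodup ∧
    List.Chain E a (l ++ [a])

section ShepherdsonAux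

open Finset Pointwise

universe u

section
variable {G : Type*} [AddCommGroup G] [Fintype G] [DecidableEq G]

/-- Dyson e-transform step for the Scherk argument. -/
theorem scherk_transform (A B : Finset G)
    (h0A : (0:G) ∈ A) (h0B : (0:G) ∈ B)
    (cond : ∀ a ∈ A, ∀ b ∈ B, a + b = 0 → a = 0 ∧ b = 0)
    (e : G) (heA : e ∈ A) (heB : e ∈ B) (hne : e ≠ 0) :
    (0:G) ∈ A ∪ A.image (· + e) ∧
    (0:G) ∈ B.filter (fun b => b + e ∈ B) ∧
    (∀ a ∈ A ∪ A.image (· + e), ∀ b ∈ B.filter (fun b => b + e ∈ B),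
      a + b = 0 → a = 0 ∧ b = 0) ∧
    (A ∪ A.image (· + e)) + (B.filter (fun b => b + e ∈ B)) ⊆ A + B ∧
    (A ∪ A.image (· + e)).card = A.card + (A.image (· + e) \ A).card ∧
    (B.filter (fun b => b + e ∈ B)).card + (B.image (· + e) \ B).card = B.card := by
  have hnegB : (-e) ∉ B := by
    intro h
    have := cond e heA (-e) h (by abel)
    exact hne this.1
  refine ⟨Finset.mem_union_left _ h0A, ?_, ?_, ?_, ?_, ?_⟩
  · exact Finset.mem_filter.mpr ⟨h0B, by simpa using heB⟩
  · -- condition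
    intro a ha b hb hab
    obtain ⟨hbB, hbe⟩ := Finset.mem_filter.mp hb
    rcases Finset.mem_union.mp ha with haA | haI
    · exact cond a haA b hbB hab
    · obtain ⟨a', ha', rfl⟩ := Finset.mem_image.mp haI
      have : a' + (b + e) = 0 := by rw [← hab]; abel
      have h2 := cond a' ha' (b + e) hbe this
      exfalso
      apply hnegB
      have hb' : b = -e := by
        have h3 := h2.2
        rw [eq_comm, neg_eq_iff_add_eq_zero, add_comm]; exact h3
      rwa [hb'] at hbB
  · -- sumset inclusion
    intro w hw
    rw [Finset.mem_add] at hw ⊢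
    obtain ⟨a, ha, b, hb, rfl⟩ := hw
    obtain ⟨hbB, hbe⟩ := Finset.mem_filter.mp hb
    rcases Finset.mem_union.mp ha with haA | haI
    · exact ⟨a, haA, b, hbB, rfl⟩
    · obtain ⟨a', ha', rfl⟩ := Finset.mem_image.mp haI
      exact ⟨a', ha', b + e, hbe, by abel⟩
  · rw [← Finset.union_sdiff_self_eq_union, Finset.card_union_of_disjoint Finset.disjoint_sdiff]
  · -- card of filter
    rw [← Finset.card_filter_add_card_filter_not (s := B) (p := fun b => b + e ∈ B)]
    congr 1
    have : B.image (· + e) \ B = (B.filter (fun b => ¬ (b + e ∈ B))).image (· + e) := by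
      ext g
      simp only [Finset.mem_sdiff, Finset.mem_image, Finset.mem_filter]
      constructor
      · rintro ⟨⟨b, hb, rfl⟩, hg⟩; exact ⟨b, ⟨hb, hg⟩, rfl⟩
      · rintro ⟨b, ⟨hb, hbe⟩, rfl⟩; exact ⟨⟨b, hb, rfl⟩, hbe⟩
    rw [this, Finset.card_image_of_injective _ (add_left_injective e)]

end


/-- Scherk's theorem: periodic case, reducing to the quotient group. -/
theorem scherk_periodic {G : Type u} [AddCommGroup G] [Fintype G] [DecidableEq G]
    (N : ℕ) (hGN : Fintype.card G ≤ N + 1)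
    (ih : ∀ (G' : Type u) [AddCommGroup G'] [Fintype G'] [DecidableEq G'],
       Fintype.card G' ≤ N → ∀ A B : Finset G', (0:G') ∈ A → (0:G') ∈ B →
       (∀ a ∈ A, ∀ b ∈ B, a + b = 0 → a = 0 ∧ b = 0) →
       A.card + B.card ≤ (A + B).card + 1)
    (A B : Finset G) (h0A : (0:G) ∈ A) (h0B : (0:G) ∈ B)
    (cond : ∀ a ∈ A, ∀ b ∈ B, a + b = 0 → a = 0 ∧ b = 0)
    (e : G) (hne : e ≠ 0) (hBper : ∀ b ∈ B, b + e ∈ B) :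
    A.card + B.card ≤ (A + B).card + 1 := by
  classical
  set H := AddSubgroup.zmultiples e with hH
  -- closure of B under adding elements of H
  have hclosN : ∀ (k : ℕ), ∀ b ∈ B, b + k • e ∈ B := by
    intro k
    induction k with
    | zero => intro b hb; simpa using hb
    | succ k ihk =>
      intro b hb
      have := hBper _ (ihk b hb)
      rwa [succ_nsmul, ← add_assoc]
  have hclos : ∀ t ∈ H, ∀ b ∈ B, b + t ∈ B := by
    intro t ht b hb
    have hfin : IsOfFinAddOrder e := isOfFinAddOrder_of_finite e
    rw [← hfin.mem_multiples_iff_mem_zmultiples] at ht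
    obtain ⟨k, rfl⟩ := ht
    exact hclosN k b hb
  have hHB : ∀ t ∈ H, t ∈ B := fun t ht => by simpa using hclos t ht 0 h0B
  -- A ∩ H = {0}
  have hAH : ∀ a ∈ A, a ∈ H → a = 0 := by
    intro a ha haH
    exact (cond a ha (-a) (hHB _ (H.neg_mem haH)) (by abel)).1
  -- the quotient
  letI : Fintype (G ⧸ H) := Fintype.ofFinite _
  letI : DecidableEq (G ⧸ H) := Classical.decEq _
  set π := QuotientAddGroup.mk' H with hπ
  set h := Nat.card H with hh
  have hcard : Fintype.card G = Fintype.card (G ⧸ H) * h := by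
    have := AddSubgroup.card_eq_card_quotient_mul_card_addSubgroup H
    rwa [Nat.card_eq_fintype_card (α := G), Nat.card_eq_fintype_card (α := G ⧸ H)] at this
  have h2 : 2 ≤ h := by
    have h1 : addOrderOf e ≠ 1 := by simpa [AddMonoid.addOrderOf_eq_one_iff] using hne
    have h0 : 0 < addOrderOf e := addOrderOf_pos e
    have : Nat.card H = addOrderOf e := Nat.card_zmultiples e
    rw [hh, this]
    omega
  have hGq : Fintype.card (G ⧸ H) ≤ N := by
    have hq1 : 1 ≤ Fintype.card (G ⧸ H) := Fintype.card_pos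
    nlinarith [hcard, hGN]
  -- membership in H via π
  have hπ0 : ∀ g : G, π g = 0 ↔ g ∈ H := fun g => QuotientAddGroup.eq_zero_iff g
  have hπeq : ∀ g g' : G, π g = π g' ↔ g - g' ∈ H := by
    intro g g'
    rw [hπ, QuotientAddGroup.mk'_apply, QuotientAddGroup.mk'_apply,
      QuotientAddGroup.eq_iff_sub_mem]
  -- H as a finset
  set HF : Finset G := Finset.univ.filter (· ∈ H) with hHF
  have hHFcard : HF.card = h := by
    have h1 : Nat.card ↥H = @Fintype.card ↥H (Subtype.fintype (· ∈ H)) :=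
      @Nat.card_eq_fintype_card _ (Subtype.fintype _)
    rw [hHF, hh, h1]
    exact (Fintype.card_subtype _).symm
  -- fibers
  have fiber_le : ∀ (X : Finset G) (c : G ⧸ H), (X.filter (fun g => π g = c)).card ≤ h := by
    intro X c
    rcases Finset.eq_empty_or_nonempty (X.filter (fun g => π g = c)) with hemp | ⟨a₀, ha₀⟩
    · rw [hemp]; simp
    · rw [← hHFcard]
      apply Finset.card_le_card_of_injOn (fun g => g - a₀)
      · intro g hg
        obtain ⟨hgX, hgc⟩ := Finset.mem_filter.mp hg
        obtain ⟨_, hac⟩ := Finset.mem_filter.mp ha₀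
        rw [hHF]
        simp only [Finset.mem_coe, Finset.mem_filter, Finset.mem_univ, true_and]
        rw [← hπeq]
        rw [hgc, hac]
      · intro x _ y _ hxy
        simpa using sub_left_injective hxy
  have fiber_eq : ∀ (X : Finset G), (∀ t ∈ H, ∀ x ∈ X, x + t ∈ X) →
      ∀ c ∈ X.image π, (X.filter (fun g => π g = c)).card = h := by
    intro X hX c hc
    obtain ⟨a₀, ha₀X, rfl⟩ := Finset.mem_image.mp hc
    refine le_antisymm (fiber_le X _) ?_
    rw [← hHFcard]
    apply Finset.card_le_card_of_injOn (fun t => a₀ + t)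
    · intro t ht
      rw [hHF] at ht
      simp only [Finset.mem_coe, Finset.mem_filter, Finset.mem_univ, true_and] at ht
      refine Finset.mem_filter.mpr ⟨hX t ht a₀ ha₀X, ?_⟩
      rw [hπeq]
      simpa using ht
    · intro x _ y _ hxy
      simpa using hxy
  have card_mul : ∀ (X : Finset G), (∀ t ∈ H, ∀ x ∈ X, x + t ∈ X) →
      X.card = (X.image π).card * h := by
    intro X hX
    rw [Finset.card_eq_sum_card_image π X]
    rw [Finset.sum_congr rfl (fun c hc => fiber_eq X hX c hc)]
    simp [mul_comm]
  -- counting for A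
  have hA0 : (0 : G ⧸ H) ∈ A.image π := by
    refine Finset.mem_image.mpr ⟨0, h0A, ?_⟩
    simp
  have cardA : A.card + h ≤ (A.image π).card * h + 1 := by
    have hsum : A.card = ∑ c ∈ A.image π, (A.filter (fun g => π g = c)).card :=
      Finset.card_eq_sum_card_image π A
    rw [Finset.sum_eq_sum_sdiff_singleton_add hA0] at hsum
    have hfib0 : (A.filter (fun g => π g = 0)).card ≤ 1 := by
      apply Finset.card_le_one.mpr
      intro a ha b hb
      obtain ⟨haA, haH⟩ := Finset.mem_filter.mp ha
      obtain ⟨hbA, hbH⟩ := Finset.mem_filter.mp hb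
      rw [hπ0] at haH hbH
      rw [hAH a haA haH, hAH b hbA hbH]
    have hrest : ∑ c ∈ A.image π \ {0}, (A.filter (fun g => π g = c)).card ≤
        ((A.image π).card - 1) * h := by
      have := Finset.sum_le_card_nsmul (A.image π \ {0}) _ h
        (fun c _ => fiber_le A c)
      have hcardd : (A.image π \ {0}).card = (A.image π).card - 1 := by
        rw [Finset.card_sdiff_of_subset (by simpa using hA0)]
        simp
      rw [hcardd] at this
      simpa using this
    have himg1 : 1 ≤ (A.image π).card := Finset.card_pos.mpr ⟨0, hA0⟩
    have heq : ((A.image π).card - 1) * h + h = (A.image π).card * h := by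
      obtain ⟨k, hk⟩ : ∃ k, (A.image π).card = k + 1 :=
        ⟨(A.image π).card - 1, (Nat.succ_pred_eq_of_pos himg1).symm⟩
      rw [hk, Nat.add_sub_cancel, add_mul, one_mul]
    omega
  -- counting for B and A+B
  have hBclos : ∀ t ∈ H, ∀ b ∈ B, b + t ∈ B := hclos
  have cardB : B.card = (B.image π).card * h := card_mul B (fun t ht b hb => hclos t ht b hb)
  have hABclos : ∀ t ∈ H, ∀ w ∈ A + B, w + t ∈ A + B := by
    intro t ht w hw
    obtain ⟨a, ha, b, hb, rfl⟩ := Finset.mem_add.mp hw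
    rw [add_assoc]
    exact Finset.add_mem_add ha (hclos t ht b hb)
  have cardAB : (A + B).card = ((A+B).image π).card * h := card_mul _ hABclos
  have himgAB : (A + B).image π = A.image π + B.image π := Finset.image_add π
  -- quotient condition
  have condq : ∀ a ∈ A.image π, ∀ b ∈ B.image π, a + b = 0 → a = 0 ∧ b = 0 := by
    intro aq haq bq hbq habq
    obtain ⟨a, haA, rfl⟩ := Finset.mem_image.mp haq
    obtain ⟨b, hbB, rfl⟩ := Finset.mem_image.mp hbq
    have : π (a + b) = 0 := by rw [map_add]; exact habq
    rw [hπ0] at this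
    -- a + b ∈ H, so -a = b - (a+b) ... b + (-(a+b)) ∈ B
    have hbmem : -a ∈ B := by
      have := hclos _ (H.neg_mem this) b hbB
      have heq : b + -(a + b) = -a := by abel
      rwa [heq] at this
    have ha0 := (cond a haA (-a) hbmem (by abel)).1
    constructor
    · rw [ha0]; simp
    · rw [ha0, zero_add] at this
      rw [← hπ0 b] at this
      exact this
  -- quotient 0 membership
  have h0Aq : (0 : G ⧸ H) ∈ A.image π := hA0
  have h0Bq : (0 : G ⧸ H) ∈ B.image π := Finset.mem_image.mpr ⟨0, h0B, by simp⟩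
  -- apply ih
  have key := ih (G ⧸ H) hGq (A.image π) (B.image π) h0Aq h0Bq condq
  -- combine
  rw [himgAB] at cardAB
  have e1 : A.card + B.card + h ≤ ((A.image π).card + (B.image π).card) * h + 1 := by
    rw [add_mul]
    omega
  have e2 : ((A.image π).card + (B.image π).card) * h ≤
      (((A.image π) + (B.image π)).card + 1) * h := Nat.mul_le_mul_right h key
  have e3 : (((A.image π) + (B.image π)).card + 1) * h =
      ((A.image π) + (B.image π)).card * h + h := by ring
  omega



theorem measure_lt_aux {K x x' b b' : ℕ} (hb' : b' < K) (h : x' < x) :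
    x' * K + b' < x * K + b := by
  have h1 : x' * K + b' < x' * K + K := by omega
  have h2 : x' * K + K = (x' + 1) * K := by ring
  have h3 : (x' + 1) * K ≤ x * K := Nat.mul_le_mul_right K h
  omega

theorem scherk (N : ℕ) : ∀ (G : Type u) [AddCommGroup G] [Fintype G] [DecidableEq G],
    Fintype.card G ≤ N → ∀ A B : Finset G, (0:G) ∈ A → (0:G) ∈ B →
    (∀ a ∈ A, ∀ b ∈ B, a + b = 0 → a = 0 ∧ b = 0) →
    A.card + B.card ≤ (A + B).card + 1 := by
  induction N with
  | zero =>
    intro G _ _ _ hG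
    have : 0 < Fintype.card G := Fintype.card_pos
    omega
  | succ N ihN =>
    intro G instG instF instD hG
    set K := Fintype.card G + 1 with hK
    suffices h : ∀ (ν : ℕ) (A B : Finset G),
        (2 * K - (A.card + B.card)) * K + B.card ≤ ν → (0:G) ∈ A → (0:G) ∈ B →
        (∀ a ∈ A, ∀ b ∈ B, a + b = 0 → a = 0 ∧ b = 0) →
        A.card + B.card ≤ (A + B).card + 1 by
      intro A B h0A h0B cond
      exact h _ A B le_rfl h0A h0B cond
    intro ν
    induction ν with
    | zero =>
      intro A B hmeas _ _ _
      exfalso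
      have hA : A.card ≤ K - 1 := by
        have := Finset.card_le_univ A
        omega
      have hB : B.card ≤ K - 1 := by
        have := Finset.card_le_univ B
        omega
      have h2 : 2 ≤ 2 * K - (A.card + B.card) := by omega
      have := Nat.mul_le_mul_right K h2
      omega
    | succ ν ihm =>
      intro A B hmeas h0A h0B cond
      by_cases hD : ∃ e, e ∈ A ∧ e ∈ B ∧ e ≠ 0
      · obtain ⟨e, heA, heB, hne⟩ := hD
        by_cases hBper : ∀ b ∈ B, b + e ∈ B
        · exact scherk_periodic N hG ihN A B h0A h0B cond e hne hBper
        · by_cases hAper : ∀ a ∈ A, a + e ∈ A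
          · have cond' : ∀ b ∈ B, ∀ a ∈ A, b + a = 0 → b = 0 ∧ a = 0 := by
              intro b hb a ha hba
              exact (cond a ha b hb (by rwa [add_comm])).symm
            have := scherk_periodic N hG ihN B A h0B h0A cond' e hne hAper
            rw [add_comm B A] at this
            omega
          · push_neg at hBper hAper
            set fA := (A.image (· + e) \ A).card with hfA
            set fB := (B.image (· + e) \ B).card with hfB
            have hfA1 : 1 ≤ fA := by
              obtain ⟨a, ha, hae⟩ := hAper
              refine Finset.card_pos.mpr ⟨a + e, ?_⟩
              exact Finset.mem_sdiff.mpr ⟨Finset.mem_image.mpr ⟨a, ha, rfl⟩, hae⟩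
            have hfB1 : 1 ≤ fB := by
              obtain ⟨b, hb, hbe⟩ := hBper
              refine Finset.card_pos.mpr ⟨b + e, ?_⟩
              exact Finset.mem_sdiff.mpr ⟨Finset.mem_image.mpr ⟨b, hb, rfl⟩, hbe⟩
            -- cards bounded
            have hcardle : ∀ X : Finset G, X.card ≤ K - 1 := by
              intro X
              have := Finset.card_le_univ X
              omega
            by_cases hf : fB ≤ fA
            · obtain ⟨m0A, m0B, condT, hsub, hcA, hcB⟩ :=
                scherk_transform A B h0A h0B cond e heA heB hne
              set A' := A ∪ A.image (· + e) with hA'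
              set B' := B.filter (fun b => b + e ∈ B) with hB'
              have hmeas' : (2 * K - (A'.card + B'.card)) * K + B'.card ≤ ν := by
                have hbound := hcardle B'
                have hboundA := hcardle A'
                have hboundB := hcardle B
                have hboundAo := hcardle A
                rcases lt_or_eq_of_le hf with hlt | heq
                · have : (2 * K - (A'.card + B'.card)) * K + B'.card <
                      (2 * K - (A.card + B.card)) * K + B.card := by
                    apply measure_lt_aux (by omega)
                    omega
                  omega
                · have hx : 2 * K - (A'.card + B'.card) = 2 * K - (A.card + B.card) := by
                    omega
                  rw [hx]
                  have : B'.card < B.card := by omega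
                  omega
              have hIH := ihm A' B' hmeas' m0A m0B condT
              have hle := Finset.card_le_card hsub
              omega
            · push_neg at hf
              have cond' : ∀ b ∈ B, ∀ a ∈ A, b + a = 0 → b = 0 ∧ a = 0 := by
                intro b hb a ha hba
                exact (cond a ha b hb (by rwa [add_comm])).symm
              obtain ⟨m0B, m0A, condT, hsub, hcB, hcA⟩ :=
                scherk_transform B A h0B h0A cond' e heB heA hne
              set B'' := B ∪ B.image (· + e) with hB''
              set A'' := A.filter (fun a => a + e ∈ A) with hA''
              have hmeas' : (2 * K - (B''.card + A''.card)) * K + A''.card ≤ ν := by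
                have h1 := hcardle A''
                have h2 := hcardle B''
                have h3 := hcardle A
                have h4 := hcardle B
                have : (2 * K - (B''.card + A''.card)) * K + A''.card <
                    (2 * K - (A.card + B.card)) * K + B.card := by
                  apply measure_lt_aux (by omega)
                  omega
                omega
              have hIH := ihm B'' A'' hmeas' m0B m0A condT
              have hsub' : B'' + A'' ⊆ A + B := by rw [add_comm A B]; exact hsub
              have hle := Finset.card_le_card hsub'
              omega
      · -- A ∩ B = {0}
        push_neg at hD
        have hsub : A ∪ B ⊆ A + B := by
          intro x hx
          rcases Finset.mem_union.mp hx with hxA | hxB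
          · exact Finset.mem_add.mpr ⟨x, hxA, 0, h0B, by simp⟩
          · exact Finset.mem_add.mpr ⟨0, h0A, x, hxB, by simp⟩
        have hinter : A ∩ B = {0} := by
          apply Finset.Subset.antisymm
          · intro x hx
            obtain ⟨hxA, hxB⟩ := Finset.mem_inter.mp hx
            simpa using hD x hxA hxB
          · intro x hx
            rw [Finset.mem_singleton] at hx
            subst hx
            exact Finset.mem_inter.mpr ⟨h0A, h0B⟩
        have := Finset.card_union_add_card_inter A B
        rw [hinter] at this
        simp at this
        have hle := Finset.card_le_card hsub
        omega

end ShepherdsonAux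

open Finset Pointwise in
theorem stmt_13 {G : Type*} [AddCommGroup G] [Fintype G] (n s : ℕ)
    (hn : Fintype.card G = n) (S : Finset G) (hS0 : (0 : G) ∉ S)
    (hs : S.card = s) (hs1 : 1 ≤ s) :
    ∃ l : List G, (∀ x ∈ l, x ∈ S) ∧ 1 ≤ l.length ∧
      l.length ≤ ⌈(n : ℚ) / (s : ℚ)⌉₊ ∧ l.sum = 0 := by
  classical
  by_contra hcon
  push_neg at hcon
  set m := ⌈(n : ℚ) / (s : ℚ)⌉₊ with hm
  have hn1 : 1 ≤ n := by rw [← hn]; exact Fintype.card_pos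
  have hms : n ≤ m * s := by
    have h1 : (n:ℚ)/(s:ℚ) ≤ m := Nat.le_ceil _
    have hs0 : (0:ℚ) < s := by exact_mod_cast hs1
    rw [div_le_iff₀ hs0] at h1
    exact_mod_cast h1
  have hm1 : 1 ≤ m := by
    rcases Nat.eq_zero_or_pos m with h0 | h1
    · rw [h0, zero_mul] at hms; omega
    · exact h1
  set B := insert (0:G) S with hB
  have h0B : (0:G) ∈ B := Finset.mem_insert_self 0 S
  have hBcard : B.card = s + 1 := by rw [hB, Finset.card_insert_of_notMem hS0, hs]
  set C : ℕ → Finset G := fun j => (fun X => X + B)^[j] {0} with hC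
  have hC0 : C 0 = {0} := rfl
  have hCsucc : ∀ j, C (j+1) = C j + B := by
    intro j
    rw [hC]
    simp [Function.iterate_succ_apply']
  -- extraction of lists
  have hmem : ∀ j, ∀ g ∈ C j, ∃ l : List G,
      (∀ x ∈ l, x ∈ S) ∧ l.length ≤ j ∧ l.sum = g := by
    intro j
    induction j with
    | zero =>
      intro g hg
      rw [hC0, Finset.mem_singleton] at hg
      exact ⟨[], by simp, by simp, by simp [hg.symm]⟩
    | succ j ih =>
      intro g hg
      rw [hCsucc j] at hg
      obtain ⟨a, ha, b, hb, rfl⟩ := Finset.mem_add.mp hg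
      obtain ⟨l, hlS, hllen, hlsum⟩ := ih a ha
      rcases Finset.mem_insert.mp hb with rfl | hbS
      · exact ⟨l, hlS, by omega, by rw [hlsum, add_zero]⟩
      · refine ⟨b :: l, ?_, by simp; omega, ?_⟩
        · intro x hx
          rcases List.mem_cons.mp hx with rfl | hxl
          · exact hbS
          · exact hlS x hxl
        · rw [List.sum_cons, hlsum, add_comm]
  have h0C : ∀ j, (0:G) ∈ C j := by
    intro j
    induction j with
    | zero => rw [hC0]; exact Finset.mem_singleton_self 0
    | succ j ih =>
      rw [hCsucc j]
      exact Finset.mem_add.mpr ⟨0, ih, 0, h0B, by simp⟩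
  -- Scherk condition
  have cond : ∀ j, j + 1 ≤ m → ∀ a ∈ C j, ∀ b ∈ B, a + b = 0 → a = 0 ∧ b = 0 := by
    intro j hjm a ha b hb hab
    rcases Finset.mem_insert.mp hb with rfl | hbS
    · rw [add_zero] at hab
      exact ⟨hab, rfl⟩
    · exfalso
      obtain ⟨l, hlS, hllen, hlsum⟩ := hmem j a ha
      have hlist : ∀ x ∈ l ++ [b], x ∈ S := by
        intro x hx
        rcases List.mem_append.mp hx with hxl | hxb
        · exact hlS x hxl
        · rw [List.mem_singleton] at hxb; rw [hxb]; exact hbS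
      have hsum : (l ++ [b]).sum = 0 := by
        rw [List.sum_append, List.sum_singleton, hlsum, hab]
      have hlen1 : 1 ≤ (l ++ [b]).length := by simp
      have hlen2 : (l ++ [b]).length ≤ m := by simp; omega
      exact hcon (l ++ [b]) hlist hlen1 hlen2 hsum
  -- growth
  have growth : ∀ j, j + 1 ≤ m → j * s + 1 ≤ (C j).card := by
    intro j
    induction j with
    | zero => intro _; rw [hC0]; simp
    | succ j ih =>
      intro hjm
      have hprev := ih (by omega)
      have hSch := scherk (Fintype.card G) G le_rfl (C j) B (h0C j) h0B
        (cond j (by omega))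
      rw [← hCsucc j] at hSch
      have : (j+1)*s = j*s + s := by ring
      omega
  -- endgame
  have hgrow := growth (m-1) (by omega)
  set T := S.image (fun x => -x) with hT
  have hTcard : T.card = s := by
    rw [hT, Finset.card_image_of_injective _ neg_injective, hs]
  have hdisj : Disjoint T (C (m-1)) := by
    rw [Finset.disjoint_left]
    intro y hyT hyC
    obtain ⟨x, hxS, rfl⟩ := Finset.mem_image.mp hyT
    obtain ⟨l, hlS, hllen, hlsum⟩ := hmem (m-1) _ hyC
    have hlist : ∀ z ∈ l ++ [x], z ∈ S := by
      intro z hz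
      rcases List.mem_append.mp hz with hzl | hzx
      · exact hlS z hzl
      · rw [List.mem_singleton] at hzx; rw [hzx]; exact hxS
    have hsum : (l ++ [x]).sum = 0 := by
      rw [List.sum_append, List.sum_singleton, hlsum]; abel
    have hlen1 : 1 ≤ (l ++ [x]).length := by simp
    have hlen2 : (l ++ [x]).length ≤ m := by simp; omega
    exact hcon (l ++ [x]) hlist hlen1 hlen2 hsum
  have hunion : (T ∪ C (m-1)).card = T.card + (C (m-1)).card :=
    Finset.card_union_of_disjoint hdisj
  have hbound : (T ∪ C (m-1)).card ≤ n := by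
    rw [← hn, ← Finset.card_univ]
    exact Finset.card_le_univ _
  have heq : (m-1)*s + s = m*s := by
    obtain ⟨k, hk⟩ : ∃ k, m = k + 1 := ⟨m - 1, by omega⟩
    rw [hk]
    simp [add_mul]
  omega
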